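/- Let P be a partially ordered set with least element 0 and greatest element 1 where 0 ≠ 1, let V be a set disjoint from P, let (V; E) be a graph on V, let H = P ∪ V, and let ν = {(x,y) ∈ P × P : x ≤ y in P} ∪ (H × ({1} ∪ V)). Let I = {(u,v) ∈ V × V : {u,v} ∈ E} ∪ {(p,q) : p, q ∈ P \ {0,1} and p < q} ∪ ({1} × V). Then ν is the smallest reflexive and transitive relation on H containing I ∪ ({0} × H) ∪ (H × {1}). -/
import Mathlib


/-- On `H = P ⊔ V`, the relation `ν = {(x,y) ∈ P × P : x ≤ y} ∪ (H × ({1} ∪ V))`. -/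
def nuRel (P : Type*) [PartialOrder P] [BoundedOrder P] (V : Type*) :
    (P ⊕ V) → (P ⊕ V) → Prop :=
  fun x y => (∃ p q : P, x = Sum.inl p ∧ y = Sum.inl q ∧ p ≤ q) ∨
    (y = Sum.inl (⊤ : P) ∨ ∃ v : V, y = Sum.inr v)

/-- On `H = P ⊔ V`, the relation
`I = {(u,v) ∈ V × V : {u,v} ∈ E} ∪ {(p,q) : p, q ∈ P \ {0,1}, p < q} ∪ ({1} × V)`. -/
def IRel (P : Type*) [PartialOrder P] [BoundedOrder P] (V : Type*) (E : SimpleGraph V) :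
    (P ⊕ V) → (P ⊕ V) → Prop :=
  fun x y => (∃ u v : V, x = Sum.inr u ∧ y = Sum.inr v ∧ E.Adj u v) ∨
    (∃ p q : P, x = Sum.inl p ∧ y = Sum.inl q ∧
      p ≠ ⊥ ∧ p ≠ ⊤ ∧ q ≠ ⊥ ∧ q ≠ ⊤ ∧ p < q) ∨
    (x = Sum.inl (⊤ : P) ∧ ∃ v : V, y = Sum.inr v)

/-- The generating relation `I ∪ ({0} × H) ∪ (H × {1})`. -/
def baseRel (P : Type*) [PartialOrder P] [BoundedOrder P] (V : Type*) (E : SimpleGraph V) :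
    (P ⊕ V) → (P ⊕ V) → Prop :=
  fun x y => IRel P V E x y ∨ x = Sum.inl (⊥ : P) ∨ y = Sum.inl (⊤ : P)

/-- **Lemma.** With `P`, `V`, `E`, `H = P ∪ V`, `ν`, and `I` as described, `ν` is the
smallest reflexive and transitive relation on `H` containing
`I ∪ ({0} × H) ∪ (H × {1})`. -/
theorem nuRel_is_generated (P : Type*) [PartialOrder P] [BoundedOrder P]
    (V : Type*) [Nonempty V] (E : SimpleGraph V) (h01 : (⊥ : P) ≠ ⊤) :
    Reflexive (nuRel P V) ∧ Transitive (nuRel P V) ∧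
    (∀ x y, baseRel P V E x y → nuRel P V x y) ∧
    (∀ ρ : (P ⊕ V) → (P ⊕ V) → Prop, Reflexive ρ → Transitive ρ →
      (∀ x y, baseRel P V E x y → ρ x y) → ∀ x y, nuRel P V x y → ρ x y) := by
  refine ⟨?_, ?_, ?_, ?_⟩
  · intro x
    cases x with
    | inl p => exact Or.inl ⟨p, p, rfl, rfl, le_refl p⟩
    | inr v => exact Or.inr (Or.inr ⟨v, rfl⟩)
  · intro x y z hxy hyz
    rcases hyz with ⟨p, q, hy, hz, hpq⟩ | hz
    · rcases hxy with ⟨a, b, hx, hy', hab⟩ | hy'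
      · subst hx; subst hz
        rw [hy] at hy'
        injection hy' with hbp
        exact Or.inl ⟨a, q, rfl, rfl, le_trans (hbp ▸ hab) hpq⟩
      · rcases hy' with hy' | ⟨v, hv⟩
        · rw [hy'] at hy
          injection hy with htp
          have hq : q = ⊤ := top_le_iff.mp (htp ▸ hpq)
          exact Or.inr (Or.inl (by rw [hz, hq]))
        · rw [hv] at hy; cases hy
    · exact Or.inr hz
  · intro x y h
    rcases h with h | hx | hy
    · rcases h with ⟨u, v, hx, hy, _⟩ | ⟨p, q, hx, hy, _, _, _, _, hpq⟩ | ⟨hx, v, hy⟩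
      · exact Or.inr (Or.inr ⟨v, hy⟩)
      · exact Or.inl ⟨p, q, hx, hy, le_of_lt hpq⟩
      · exact Or.inr (Or.inr ⟨v, hy⟩)
    · cases y with
      | inl q => exact Or.inl ⟨⊥, q, hx, rfl, bot_le⟩
      | inr v => exact Or.inr (Or.inr ⟨v, rfl⟩)
    · exact Or.inr (Or.inl hy)
  · intro ρ href htrans hbase x y h
    rcases h with ⟨p, q, hx, hy, hpq⟩ | hy | ⟨v, hy⟩
    · subst hx; subst hy
      rcases eq_or_lt_of_le hpq with rfl | hlt
      · exact href _
      · by_cases hp : p = ⊥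
        · exact hbase _ _ (Or.inr (Or.inl (by rw [hp])))
        · by_cases hq : q = ⊤
          · exact hbase _ _ (Or.inr (Or.inr (by rw [hq])))
          · refine hbase _ _ (Or.inl (Or.inr (Or.inl ⟨p, q, rfl, rfl, hp, ?_, ?_, hq, hlt⟩)))
            · rintro rfl; exact hq (top_le_iff.mp hlt.le)
            · rintro rfl; exact hp (le_bot_iff.mp hlt.le)
    · subst hy; exact hbase _ _ (Or.inr (Or.inr rfl))
    · subst hy
      exact htrans (hbase x (Sum.inl ⊤) (Or.inr (Or.inr rfl)))
        (hbase _ _ (Or.inl (Or.inr (Or.inr ⟨rfl, v, rfl⟩))))
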